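/- arXiv:2412.05790 — 4 statements merged into one kernel-verified Lean document; each statement's English description precedes it below -/
import Mathlib

section
/- Let f : ℝᵈ → ℝ be C² such that all Hessians ∇²f(x), x ∈ ℝᵈ, pairwise commute and are simultaneously diagonalizable by a single fixed orthogonal matrix U (i.e., ∇²f(x) = Uᵀ D(x) U with D(x) diagonal for all x). Then there exist functions f₁,…,f_d : ℝ → ℝ such that f(x) = Σᵢ fᵢ((Ux)ᵢ) + f(0) - Σᵢ fᵢ((U·0)ᵢ) for all x; equivalently f is separable in the basis U up to a constant. -/
open Matrix

/-- The Hessian matrix of `f : (Fin d → ℝ) → ℝ` at `x`, with entries the second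
partial derivatives `∂²f/∂xᵢ∂xⱼ (x)`. -/
noncomputable def hessianMatrix {d : ℕ} (f : (Fin d → ℝ) → ℝ) (x : Fin d → ℝ) :
    Matrix (Fin d) (Fin d) ℝ :=
  Matrix.of fun i j =>
    fderiv ℝ (fun y => fderiv ℝ f y (Pi.single j 1)) x (Pi.single i 1)


lemma conj_sum_entry {d : ℕ} (U M : Matrix (Fin d) (Fin d) ℝ) (i j : Fin d) :
    ∑ k, ∑ l, U j k * U i l * M k l = (U * M * Uᵀ) j i := by
  simp only [Matrix.mul_apply, Matrix.transpose_apply, Finset.sum_mul]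
  rw [Finset.sum_comm]
  exact Finset.sum_congr rfl fun k _ => Finset.sum_congr rfl fun l _ => by ring

lemma pi_single_expand {d : ℕ} (w : Fin d → ℝ) :
    w = ∑ j, (w j) • (Pi.single j (1:ℝ) : Fin d → ℝ) := by
  conv_lhs => rw [← Finset.univ_sum_single w]
  refine Finset.sum_congr rfl fun j _ => ?_
  rw [← Pi.single_smul, smul_eq_mul, mul_one]


lemma separable_of_diag_mixed {d : ℕ} (h : (Fin d → ℝ) → ℝ) (hh : ContDiff ℝ 2 h)
    (hmix : ∀ z : Fin d → ℝ, ∀ i j : Fin d, i ≠ j →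
      fderiv ℝ (fun y => fderiv ℝ h y (Pi.single i 1)) z (Pi.single j 1) = 0) :
    ∀ y : Fin d → ℝ, h y = (∑ i, (h (Pi.single i (y i)) - h 0)) + h 0 := by
  have hd1 : Differentiable ℝ h := hh.differentiable (by norm_num)
  have hfd : ContDiff ℝ 1 (fderiv ℝ h) := hh.fderiv_right (le_refl _)
  set p : Fin d → (Fin d → ℝ) → ℝ := fun i y => fderiv ℝ h y (Pi.single i 1) with hp_def
  have hpdiff : ∀ i, Differentiable ℝ (p i) := by
    intro i y
    exact ((hfd.differentiable (by norm_num)) y).clm_apply (differentiableAt_const _)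
  -- expansion of fderiv of p i in coordinates
  have hexp : ∀ i (z w : Fin d → ℝ), fderiv ℝ (p i) z w
      = ∑ j, w j * fderiv ℝ (p i) z (Pi.single j 1) := by
    intro i z w
    have hw : w = ∑ j, (w j) • (Pi.single j (1:ℝ) : Fin d → ℝ) := by
      conv_lhs => rw [← Finset.univ_sum_single w]
      refine Finset.sum_congr rfl fun j _ => ?_
      rw [← Pi.single_smul, smul_eq_mul, mul_one]
    conv_lhs => rw [hw]
    rw [map_sum]
    refine Finset.sum_congr rfl fun j _ => ?_
    rw [_root_.map_smul, smul_eq_mul]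
  -- Step A : p i y depends only on y i
  have stepA : ∀ i (y : Fin d → ℝ), p i y = p i (Pi.single i (y i)) := by
    intro i y
    set a : Fin d → ℝ := Pi.single i (y i) with ha
    set w : Fin d → ℝ := y - a with hwdef
    have hwi : w i = 0 := by simp [hwdef, ha]
    have hF : ∀ t : ℝ, HasDerivAt (fun t : ℝ => p i (a + t • w))
        (fderiv ℝ (p i) (a + t • w) w) t := by
      intro t
      have hline : HasDerivAt (fun t : ℝ => a + t • w) w t := by
        simpa using ((hasDerivAt_id t).smul_const w).const_add a
      exact ((hpdiff i (a + t • w)).hasFDerivAt.comp_hasDerivAt t hline)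
    have hzero : ∀ t : ℝ, deriv (fun t : ℝ => p i (a + t • w)) t = 0 := by
      intro t
      rw [(hF t).deriv, hexp]
      refine Finset.sum_eq_zero fun j _ => ?_
      by_cases hji : j = i
      · subst hji; rw [hwi, zero_mul]
      · rw [hmix _ i j (Ne.symm hji), mul_zero]
    have hconst := is_const_of_deriv_eq_zero (f := fun t : ℝ => p i (a + t • w))
      (fun t => (hF t).differentiableAt) hzero 1 0
    simpa [hwdef] using hconst
  -- Step B
  have stepB : ∀ i (y : Fin d → ℝ),
      h y = h (y - Pi.single i (y i)) + h (Pi.single i (y i)) - h 0 := by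
    intro i y
    set q : Fin d → ℝ := y - Pi.single i (y i) with hq
    have hqi : q i = 0 := by simp [hq]
    set e : Fin d → ℝ := Pi.single i 1 with he
    have hG : ∀ t : ℝ, HasDerivAt (fun t : ℝ => h (q + t • e) - h (t • e))
        (p i (q + t • e) - p i (t • e)) t := by
      intro t
      have hline1 : HasDerivAt (fun t : ℝ => q + t • e) e t := by
        simpa using ((hasDerivAt_id t).smul_const e).const_add q
      have hline2 : HasDerivAt (fun t : ℝ => t • e) e t := by
        simpa using (hasDerivAt_id t).smul_const e
      have h1 : HasDerivAt (fun t : ℝ => h (q + t • e)) (fderiv ℝ h (q + t • e) e) t :=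
        (hd1 (q + t • e)).hasFDerivAt.comp_hasDerivAt t hline1
      have h2 : HasDerivAt (fun t : ℝ => h (t • e)) (fderiv ℝ h (t • e) e) t :=
        (hd1 (t • e)).hasFDerivAt.comp_hasDerivAt t hline2
      exact h1.sub h2
    have hzero : ∀ t : ℝ, deriv (fun t : ℝ => h (q + t • e) - h (t • e)) t = 0 := by
      intro t
      rw [(hG t).deriv]
      have hte : (t • e) = Pi.single i t := by
        funext k; by_cases hk : k = i
        · subst hk; simp [he]
        · simp [he, Pi.single_eq_of_ne hk]
      have h1 : (q + t • e) i = t := by simp [hqi, hte]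
      rw [stepA i (q + t • e), stepA i (t • e), h1, hte, Pi.single_eq_same, sub_self]
    have hconst := is_const_of_deriv_eq_zero
      (f := fun t : ℝ => h (q + t • e) - h (t • e))
      (fun t => (hG t).differentiableAt) hzero (y i) 0
    have hye : (y i) • e = Pi.single i (y i) := by
      funext k; by_cases hk : k = i
      · subst hk; simp [he]
      · simp [he, Pi.single_eq_of_ne hk]
    have hqy : q + (y i) • e = y := by rw [hye, hq, sub_add_cancel]
    have hqy' : q + Pi.single i (y i) = y := by rw [hq, sub_add_cancel]
    simp only [hye, zero_smul, add_zero, smul_zero, hqy'] at hconst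
    linarith [hconst]
  -- Step C : induction over finsets
  intro y
  have stepC : ∀ s : Finset (Fin d),
      h (fun k => if k ∈ s then y k else 0)
        = (∑ i ∈ s, (h (Pi.single i (y i)) - h 0)) + h 0 := by
    intro s
    induction s using Finset.induction_on with
    | empty =>
      simp only [Finset.notMem_empty, if_false, Finset.sum_empty, zero_add]
      exact congrArg h rfl
    | insert i s hi ih =>
      set z : Fin d → ℝ := fun k => if k ∈ insert i s then y k else 0 with hz
      have hzi : z i = y i := by simp [hz]
      have hzq : z - Pi.single i (z i) = fun k => if k ∈ s then y k else 0 := by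
        funext k
        by_cases hk : k = i
        · subst hk; simp [hz, hi]
        · simp [hz, Pi.single_eq_of_ne hk, Finset.mem_insert, hk]
      rw [stepB i z, hzq, ih, hzi, Finset.sum_insert hi]
      ring
  simpa using stepC Finset.univ

/-- If `f` is `C²` and all its Hessians are simultaneously diagonalized
by a single fixed orthogonal matrix `U` (i.e. `∇²f(x) = Uᵀ D(x) U` with `D(x)`
diagonal for all `x`), then `f` is separable in the basis `U` up to a constant:
there are univariate functions `fᵢ` with
`f x = Σᵢ fᵢ((Ux)ᵢ) + f 0 - Σᵢ fᵢ((U·0)ᵢ)` for all `x`. -/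
theorem separable_of_commuting_hessians {d : ℕ}
    (f : (Fin d → ℝ) → ℝ) (hf : ContDiff ℝ 2 f)
    (U : Matrix (Fin d) (Fin d) ℝ) (hU : Uᵀ * U = 1)
    (D : (Fin d → ℝ) → Matrix (Fin d) (Fin d) ℝ)
    (hD : ∀ x, (D x).IsDiag)
    (hdiag : ∀ x, hessianMatrix f x = Uᵀ * D x * U) :
    ∃ g : Fin d → ℝ → ℝ, ∀ x : Fin d → ℝ,
      f x = (∑ i, g i (U.mulVec x i)) + f 0 - ∑ i, g i (U.mulVec 0 i) := by
  have hU' : U * Uᵀ = 1 := mul_eq_one_comm.mp hU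
  set L : (Fin d → ℝ) →L[ℝ] (Fin d → ℝ) :=
    LinearMap.toContinuousLinearMap (Matrix.mulVecLin Uᵀ) with hL
  have hLapp : ∀ v : Fin d → ℝ, L v = Uᵀ.mulVec v := fun v => rfl
  have hLe : ∀ j k, L (Pi.single j 1) k = U j k := by
    intro j k
    rw [hLapp]
    simp [Matrix.mulVec_single]
  set h : (Fin d → ℝ) → ℝ := fun y => f (L y) with hhdef
  have hh : ContDiff ℝ 2 h := hf.comp L.contDiff
  have hfdiff : Differentiable ℝ f := hf.differentiable (by norm_num)
  have hBv : ∀ v : Fin d → ℝ, Differentiable ℝ (fun x => fderiv ℝ f x v) := by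
    intro v x
    exact (((hf.fderiv_right (m := 1) (le_refl _)).differentiable (by norm_num)) x).clm_apply
      (differentiableAt_const _)
  -- bilinear expansion of the second derivative of f
  have hbil : ∀ (x u v : Fin d → ℝ), fderiv ℝ (fun y => fderiv ℝ f y v) x u
      = ∑ k, ∑ l, u k * v l * hessianMatrix f x k l := by
    intro x u v
    have hv : (fun y => fderiv ℝ f y v)
        = fun y => ∑ l, v l * fderiv ℝ f y (Pi.single l 1) := by
      funext y
      conv_lhs => rw [pi_single_expand v]
      rw [map_sum]
      exact Finset.sum_congr rfl fun l _ => by rw [_root_.map_smul, smul_eq_mul]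
    rw [hv, fderiv_fun_sum (fun l _ => ((hBv (Pi.single l 1)) x).const_mul (v l)),
      ContinuousLinearMap.sum_apply]
    rw [Finset.sum_comm]
    refine Finset.sum_congr rfl fun l _ => ?_
    rw [fderiv_const_mul ((hBv (Pi.single l 1)) x) (v l), ContinuousLinearMap.smul_apply,
      smul_eq_mul]
    -- now expand in u
    have hu : fderiv ℝ (fun y => fderiv ℝ f y (Pi.single l 1)) x u
        = ∑ k, u k * fderiv ℝ (fun y => fderiv ℝ f y (Pi.single l 1)) x (Pi.single k 1) := by
      conv_lhs => rw [pi_single_expand u]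
      rw [map_sum]
      exact Finset.sum_congr rfl fun k _ => by rw [_root_.map_smul, smul_eq_mul]
    rw [hu, Finset.mul_sum]
    refine Finset.sum_congr rfl fun k _ => ?_
    show v l * (u k * hessianMatrix f x k l) = u k * v l * hessianMatrix f x k l
    ring
  -- chain rule for h
  have hfdh : ∀ y, fderiv ℝ h y = (fderiv ℝ f (L y)).comp (L : (Fin d → ℝ) →L[ℝ] (Fin d → ℝ)) := by
    intro y
    have := fderiv_comp (𝕜 := ℝ) y (hfdiff (L y)) L.differentiableAt
    rwa [L.fderiv] at this
  have hmix : ∀ z : Fin d → ℝ, ∀ i j : Fin d, i ≠ j →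
      fderiv ℝ (fun y => fderiv ℝ h y (Pi.single i 1)) z (Pi.single j 1) = 0 := by
    intro z i j hij
    have e1 : (fun y => fderiv ℝ h y (Pi.single i 1))
        = (fun x => fderiv ℝ f x (L (Pi.single i 1))) ∘ (L : (Fin d → ℝ) → (Fin d → ℝ)) := by
      funext y
      rw [hfdh y]
      rfl
    rw [e1]
    have hc := fderiv_comp (𝕜 := ℝ) z ((hBv (L (Pi.single i 1))) (L z)) L.differentiableAt
    rw [L.fderiv] at hc
    rw [hc, ContinuousLinearMap.comp_apply, hbil]
    have : ∀ k l, (L (Pi.single j 1)) k * (L (Pi.single i 1)) l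
        * hessianMatrix f (L z) k l = U j k * U i l * (Uᵀ * D (L z) * U) k l := by
      intro k l
      rw [hLe, hLe, hdiag (L z)]
    simp only [this]
    rw [conj_sum_entry]
    have hred : U * (Uᵀ * D (L z) * U) * Uᵀ = D (L z) := by
      rw [← Matrix.mul_assoc, ← Matrix.mul_assoc, hU', Matrix.one_mul, Matrix.mul_assoc,
        hU', Matrix.mul_one]
    rw [hred]
    exact hD (L z) (Ne.symm hij)
  -- conclude via the separability lemma
  have key := separable_of_diag_mixed h hh hmix
  refine ⟨fun i t => h (Pi.single i t), fun x => ?_⟩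
  have hUx : L (U.mulVec x) = x := by
    rw [hLapp, Matrix.mulVec_mulVec, hU, Matrix.one_mulVec]
  have hfx : f x = h (U.mulVec x) := by rw [hhdef]; simp [hUx]
  have h0 : h 0 = f 0 := by rw [hhdef]; simp [map_zero]
  rw [hfx, key (U.mulVec x)]
  simp only [Matrix.mulVec_zero, Pi.zero_apply, Pi.single_zero, h0]
  rw [Finset.sum_sub_distrib]
  ring
end

section
/- For any a, b > 0, ∫₀¹ (t/a + (1-t)/b)⁻¹ dμ(t) = √(ab), where μ is the Arcsine distribution on (0,1), i.e., the weighted harmonic mean H_t(a,b) = (t a⁻¹ + (1-t) b⁻¹)⁻¹ averaged against Arcsine(0,1) equals the geometric mean of a and b. -/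
open Real Set MeasureTheory
open scoped ENNReal NNReal

/-- The Arcsine probability measure on `(0, 1)`, with density `1/(π √(t(1-t)))`. -/
noncomputable def arcsine01 : Measure ℝ :=
  MeasureTheory.volume.withDensity (fun t =>
    ENNReal.ofReal (Set.indicator (Set.Ioo (0 : ℝ) 1)
      (fun t => 1 / (Real.pi * Real.sqrt (t * (1 - t)))) t))


noncomputable def Faux (a b t : ℝ) : ℝ :=
  2 * Real.sqrt (a*b) / Real.pi * Real.arcsin (Real.sqrt (b*t/(a*(1-t)+b*t)))

lemma Faux_deriv (a b : ℝ) (ha : 0 < a) (hb : 0 < b) {t : ℝ} (ht : t ∈ Ioo (0:ℝ) 1) :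
    HasDerivAt (Faux a b)
      (1 / (Real.pi * Real.sqrt (t*(1-t))) * (t/a + (1-t)/b)⁻¹) t := by
  obtain ⟨ht0, ht1⟩ := ht
  have h1t : 0 < 1 - t := by linarith
  have hv : 0 < a*(1-t)+b*t := by positivity
  have hr0 : 0 < b*t/(a*(1-t)+b*t) := by positivity
  have hr1 : b*t/(a*(1-t)+b*t) < 1 := by
    rw [div_lt_one hv]; nlinarith
  have hnum : HasDerivAt (fun t : ℝ => b*t) b t := by
    simpa using (hasDerivAt_id t).const_mul b
  have hden : HasDerivAt (fun t : ℝ => a*(1-t)+b*t) (b - a) t := by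
    have h1 : HasDerivAt (fun t : ℝ => a*(1-t)) (-a) t := by
      have := ((hasDerivAt_id t).const_sub 1).const_mul a
      simpa using this
    have h2 : HasDerivAt (fun t : ℝ => b*t) b t := by
      simpa using (hasDerivAt_id t).const_mul b
    exact (h1.add h2).congr_deriv (by ring)
  have hrat : HasDerivAt (fun t : ℝ => b*t/(a*(1-t)+b*t))
      ((b*(a*(1-t)+b*t) - b*t*(b-a)) / (a*(1-t)+b*t)^2) t := hnum.div hden hv.ne'
  have hsq : HasDerivAt (fun t : ℝ => Real.sqrt (b*t/(a*(1-t)+b*t)))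
      ((b*(a*(1-t)+b*t) - b*t*(b-a)) / (a*(1-t)+b*t)^2 / (2 * Real.sqrt (b*t/(a*(1-t)+b*t)))) t :=
    hrat.sqrt hr0.ne'
  have hx1 : Real.sqrt (b*t/(a*(1-t)+b*t)) ≠ -1 := by
    have : (0:ℝ) ≤ Real.sqrt (b*t/(a*(1-t)+b*t)) := Real.sqrt_nonneg _
    intro h; rw [h] at this; linarith
  have hx2 : Real.sqrt (b*t/(a*(1-t)+b*t)) ≠ 1 := by
    rw [ne_eq, Real.sqrt_eq_one]; exact hr1.ne
  have harc := (Real.hasDerivAt_arcsin hx1 hx2).comp t hsq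
  have hF := harc.const_mul (2 * Real.sqrt (a*b) / Real.pi)
  refine hF.congr_deriv ?_
  symm
  rw [Real.sq_sqrt hr0.le]
  have e1 : 1 - b*t/(a*(1-t)+b*t) = a*(1-t)/(a*(1-t)+b*t) := by
    field_simp; ring
  rw [e1, Real.sqrt_div (by positivity : (0:ℝ) ≤ a*(1-t)),
      Real.sqrt_div (by positivity : (0:ℝ) ≤ b*t),
      Real.sqrt_mul ha.le, Real.sqrt_mul hb.le, Real.sqrt_mul ht0.le,
      Real.sqrt_mul ha.le (1-t),
      show b*(a*(1-t)+b*t) - b*t*(b-a) = a*b from by ring]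
  set sv := Real.sqrt (a*(1-t)+b*t) with hsv
  set sa := Real.sqrt a with hsa
  set sb := Real.sqrt b with hsb
  set st := Real.sqrt t with hst
  set s1 := Real.sqrt (1-t) with hs1
  have hva : a*(1-t)+b*t = sv*sv := (Real.mul_self_sqrt hv.le).symm
  have haa : a = sa*sa := (Real.mul_self_sqrt ha.le).symm
  have hbb : b = sb*sb := (Real.mul_self_sqrt hb.le).symm
  have htt : t = st*st := (Real.mul_self_sqrt ht0.le).symm
  have h11 : 1-t = s1*s1 := (Real.mul_self_sqrt h1t.le).symm
  have hsa0 : sa ≠ 0 := by rw [hsa]; positivity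
  have hsb0 : sb ≠ 0 := by rw [hsb]; positivity
  have hst0 : st ≠ 0 := by rw [hst]; positivity
  have hs10 : s1 ≠ 0 := by rw [hs1]; positivity
  have hsv0 : sv ≠ 0 := by rw [hsv]; positivity
  rw [hva, h11, htt, haa, hbb]
  have key : sv^2 = sa^2*s1^2 + sb^2*st^2 := by
    rw [hsv, hsa, hsb, hst, hs1, Real.sq_sqrt hv.le, Real.sq_sqrt ha.le,
      Real.sq_sqrt hb.le, Real.sq_sqrt ht0.le, Real.sq_sqrt h1t.le]
  field_simp
  linear_combination key

/-- Arcsine integral representation of the geometric mean: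
for `a, b > 0`, the Arcsine(0,1)-average of the weighted harmonic mean
`H_t(a,b) = (t/a + (1-t)/b)⁻¹` equals `√(ab)`. -/
theorem arcsine_harmonic_mean (a b : ℝ) (ha : 0 < a) (hb : 0 < b) :
    ∫ t, (t / a + (1 - t) / b)⁻¹ ∂arcsine01 = Real.sqrt (a * b) := by
  set w : ℝ → ℝ := fun t => 1 / (Real.pi * Real.sqrt (t * (1 - t))) with hw
  set ind : ℝ → ℝ := fun t => Set.indicator (Set.Ioo (0:ℝ) 1) w t with hind
  have hindnn : ∀ t, 0 ≤ ind t := by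
    intro t
    apply Set.indicator_nonneg
    intro x _
    positivity
  have hindmeas : Measurable ind := by
    apply Measurable.indicator _ measurableSet_Ioo
    fun_prop
  have hmeas : Measurable fun t => Real.toNNReal (ind t) :=
    measurable_real_toNNReal.comp hindmeas
  have hdens : (fun t => ENNReal.ofReal (Set.indicator (Set.Ioo (0:ℝ) 1)
      (fun t => 1 / (Real.pi * Real.sqrt (t * (1 - t)))) t))
      = fun t => ((Real.toNNReal (ind t) : ℝ≥0) : ℝ≥0∞) := rfl
  rw [arcsine01, hdens, integral_withDensity_eq_integral_smul hmeas]
  have hsmul : ∀ t : ℝ, (Real.toNNReal (ind t) : ℝ≥0) • (t / a + (1 - t) / b)⁻¹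
      = Set.indicator (Set.Ioo (0:ℝ) 1) (fun t => w t * (t / a + (1 - t) / b)⁻¹) t := by
    intro t
    rw [NNReal.smul_def, Real.coe_toNNReal _ (hindnn t), hind,
      Set.indicator_mul_left]
    simp [smul_eq_mul]
  simp_rw [hsmul]
  rw [integral_indicator measurableSet_Ioo, ← integral_Ioc_eq_integral_Ioo,
    ← intervalIntegral.integral_of_le (by norm_num : (0:ℝ) ≤ 1)]
  -- now FTC
  have hcontF : ContinuousOn (Faux a b) (Icc 0 1) := by
    apply ContinuousOn.mul continuousOn_const
    apply Real.continuous_arcsin.comp_continuousOn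
    apply ContinuousOn.sqrt
    apply ContinuousOn.div (by fun_prop) (by fun_prop)
    intro t ht
    have h0 := ht.1
    have h1 := ht.2
    have hpos : 0 < a*(1-t)+b*t := by
      rcases h1.eq_or_lt with rfl|h
      · simpa using hb
      · nlinarith [mul_pos ha (by linarith : (0:ℝ) < 1 - t), mul_nonneg hb.le h0]
    exact hpos.ne'
  have hderiv : ∀ t ∈ Ioo (0:ℝ) 1, HasDerivAt (Faux a b)
      (w t * (t/a + (1-t)/b)⁻¹) t := fun t ht => Faux_deriv a b ha hb ht
  have hpos : ∀ t ∈ Ioo (0:ℝ) 1, 0 ≤ w t * (t/a + (1-t)/b)⁻¹ := by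
    intro t ht
    obtain ⟨h0, h1⟩ := ht
    have : 0 < 1 - t := by linarith
    have hw0 : 0 ≤ w t := by rw [hw]; positivity
    have : 0 ≤ (t/a + (1-t)/b)⁻¹ := by positivity
    exact mul_nonneg hw0 this
  have hint : IntervalIntegrable (fun t => w t * (t/a + (1-t)/b)⁻¹) volume 0 1 :=
    (intervalIntegrable_iff_integrableOn_Ioc_of_le (by norm_num)).2
      (intervalIntegral.integrableOn_deriv_of_nonneg hcontF hderiv hpos)
  rw [intervalIntegral.integral_eq_sub_of_hasDerivAt_of_le (by norm_num) hcontF hderiv hint]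
  have hF1 : Faux a b 1 = Real.sqrt (a*b) := by
    have : b*(1:ℝ)/(a*(1-1)+b*1) = 1 := by field_simp; ring
    rw [Faux, this, Real.sqrt_one, Real.arcsin_one]
    field_simp
  have hF0 : Faux a b 0 = 0 := by
    simp [Faux]
  rw [hF1, hF0, sub_zero]
end

section
/- Let f(x) = (M/2)x² and run gradient descent x_{n+1} = x_n - β_n⁻¹ M x_n with β_n i.i.d. Arcsine(m,M), where 0 < m < M and κ = M/m. Then for every n, E[x_n] = (1 - √κ)ⁿ x₀, and consequently E[|x_n|/|x₀|]^{1/n} ≥ √κ - 1 for any x₀ ≠ 0. -/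
open Real Set MeasureTheory ProbabilityTheory
open scoped ENNReal NNReal

/-- The Arcsine probability measure on `(m, M)`, with density
`1 / (π √((M-β)(β-m)))` on `(m, M)`. -/
noncomputable def arcsineMeasure (m M : ℝ) : Measure ℝ :=
  MeasureTheory.volume.withDensity (fun β =>
    ENNReal.ofReal (Set.indicator (Set.Ioo m M)
      (fun β => 1 / (Real.pi * Real.sqrt ((M - β) * (β - m)))) β))

lemma arc_hasDeriv (m M : ℝ) (hm : 0 < m) (hmM : m < M) {x : ℝ} (hx : x ∈ Ioo m M) :
    HasDerivAt (fun x => (Real.pi * Real.sqrt (m*M))⁻¹ *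
      Real.arcsin (((M+m)*x - 2*m*M)/((M-m)*x)))
      (1 / (Real.pi * Real.sqrt ((M - x) * (x - m))) * x⁻¹) x := by
  obtain ⟨hx1, hx2⟩ := hx
  have hx0 : 0 < x := hm.trans hx1
  have hMm : 0 < M - m := by linarith
  have hd0 : (M-m)*x ≠ 0 := (mul_pos hMm hx0).ne'
  have hprod : 0 < (M - x) * (x - m) := by nlinarith
  have hs : 0 < Real.sqrt ((M - x) * (x - m)) := Real.sqrt_pos.2 hprod
  have hsm : 0 < Real.sqrt m := Real.sqrt_pos.2 hm
  have hsM : 0 < Real.sqrt M := Real.sqrt_pos.2 (hm.trans hmM)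
  have hm2 : Real.sqrt m ^ 2 = m := Real.sq_sqrt hm.le
  have hM2 : Real.sqrt M ^ 2 = M := Real.sq_sqrt (hm.trans hmM).le
  have hs2 : Real.sqrt ((M-x)*(x-m)) ^ 2 = (M-x)*(x-m) := Real.sq_sqrt hprod.le
  set u : ℝ → ℝ := fun x => ((M+m)*x - 2*m*M)/((M-m)*x) with hu_def
  have hnum : HasDerivAt (fun x => (M+m)*x - 2*m*M) (M+m) x := by
    simpa using ((hasDerivAt_id x).const_mul (M+m)).sub_const (2*m*M)
  have hden : HasDerivAt (fun x => (M-m)*x) (M-m) x := by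
    simpa using (hasDerivAt_id x).const_mul (M-m)
  have hu : HasDerivAt u
      (((M+m) * ((M-m)*x) - ((M+m)*x - 2*m*M) * (M-m)) / ((M-m)*x)^2) x :=
    hnum.div hden hd0
  have h1u : 1 - u x ^ 2
      = (2 * Real.sqrt (m*M) * Real.sqrt ((M-x)*(x-m)) / ((M-m)*x))^2 := by
    rw [hu_def]
    field_simp
    linear_combination (-4*Real.sqrt M^2*Real.sqrt ((M-x)*(x-m))^2)*hm2 + (-4*m*Real.sqrt ((M-x)*(x-m))^2)*hM2 + (-4*m*M)*hs2 + (4*Real.sqrt ((M-x)*(x-m))^2*Real.sqrt m^2)*hM2 + (4*Real.sqrt ((M-x)*(x-m))^2*M)*hm2 + (-4*Real.sqrt ((M-x)*(x-m))^2)*(Real.sq_sqrt (mul_pos (hm.trans hmM) hm).le : Real.sqrt (M*m)^2 = M*m)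
  have hupos : 0 < 1 - u x ^ 2 := by
    rw [h1u]
    exact pow_pos (div_pos (mul_pos (mul_pos two_pos
      (Real.sqrt_pos.2 (mul_pos hm (hm.trans hmM)))) hs) (mul_pos hMm hx0)) 2
  have hu1 : u x < 1 ∧ -1 < u x := by
    constructor <;> nlinarith [sq_nonneg (u x - 1), sq_nonneg (u x + 1)]
  have harcsin : HasDerivAt Real.arcsin (1 / Real.sqrt (1 - u x ^ 2)) (u x) :=
    Real.hasDerivAt_arcsin (by linarith [hu1.2]) (by linarith [hu1.1])
  have hcomp := (harcsin.comp x hu).const_mul (Real.pi * Real.sqrt (m*M))⁻¹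
  refine HasDerivAt.congr_deriv hcomp ?_
  symm
  rw [h1u]
  rw [Real.sqrt_sq (by positivity)]
  have hpi := Real.pi_pos
  rw [Real.sqrt_mul hm.le]
  field_simp
  linear_combination (2*Real.sqrt m^2)*hM2
    + (2*M)*hm2

lemma arc_inv_integral (m M : ℝ) (hm : 0 < m) (hmM : m < M)
    (hint : IntegrableOn (fun x => 1 / (Real.pi * Real.sqrt ((M - x) * (x - m))) * x⁻¹)
      (Ioo m M) volume) :
    ∫ x in Ioo m M, 1 / (Real.pi * Real.sqrt ((M - x) * (x - m))) * x⁻¹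
      = (Real.sqrt (m*M))⁻¹ := by
  have hM : 0 < M := hm.trans hmM
  have hMm : 0 < M - m := by linarith
  set F : ℝ → ℝ := fun x => (Real.pi * Real.sqrt (m*M))⁻¹ *
      Real.arcsin (((M+m)*x - 2*m*M)/((M-m)*x)) with hF
  have hcont : ContinuousOn F (Icc m M) := by
    apply ContinuousOn.mul continuousOn_const
    apply Real.continuous_arcsin.comp_continuousOn
    apply ContinuousOn.div (by fun_prop) (by fun_prop)
    intro x hx
    exact (mul_pos hMm (hm.trans_le hx.1)).ne'
  have hderiv : ∀ x ∈ Ioo m M, HasDerivAt F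
      (1 / (Real.pi * Real.sqrt ((M - x) * (x - m))) * x⁻¹) x :=
    fun x hx => arc_hasDeriv m M hm hmM hx
  have hii : IntervalIntegrable
      (fun x => 1 / (Real.pi * Real.sqrt ((M - x) * (x - m))) * x⁻¹) volume m M :=
    (intervalIntegrable_iff_integrableOn_Ioo_of_le hmM.le).2 hint
  have := intervalIntegral.integral_eq_sub_of_hasDerivAt_of_le hmM.le hcont hderiv hii
  rw [intervalIntegral.integral_of_le hmM.le, integral_Ioc_eq_integral_Ioo] at this
  rw [this, hF]
  have huM : ((M+m)*M - 2*m*M)/((M-m)*M) = 1 := by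
    rw [div_eq_one_iff_eq (mul_pos hMm hM).ne']; ring
  have hum : ((M+m)*m - 2*m*M)/((M-m)*m) = -1 := by
    rw [div_eq_iff (mul_pos hMm hm).ne']; ring
  simp only [huM, hum, Real.arcsin_one, Real.arcsin_neg, Real.arcsin_one]
  have ht : 0 < Real.sqrt (m*M) := Real.sqrt_pos.2 (by positivity)
  field_simp [Real.pi_ne_zero]
  ring

lemma arc_exp (m M : ℝ) (hm : 0 < m) (hmM : m < M)
    (hp : IsProbabilityMeasure (arcsineMeasure m M)) :
    ∫ b, (1 - b⁻¹ * M) ∂(arcsineMeasure m M) = 1 - Real.sqrt (M/m) := by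
  have hM : 0 < M := hm.trans hmM
  set D : ℝ → ℝ := fun x => 1 / (Real.pi * Real.sqrt ((M - x) * (x - m))) with hD
  set h : ℝ → ℝ := (Ioo m M).indicator D with hh
  have hDmeas : Measurable D := by fun_prop
  have hhmeas : Measurable h := hDmeas.indicator measurableSet_Ioo
  have hhnn : ∀ x, 0 ≤ h x := by
    intro x
    apply Set.indicator_nonneg
    intro y _
    positivity
  -- total lintegral is 1
  have hlint : ∫⁻ x, ENNReal.ofReal (h x) = 1 := by
    have := hp.measure_univ
    rw [arcsineMeasure, withDensity_apply _ MeasurableSet.univ, setLIntegral_univ] at this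
    exact this
  -- h is integrable with integral 1
  have hint_h : Integrable h volume := by
    refine ⟨hhmeas.aestronglyMeasurable, ?_⟩
    show (∫⁻ x, (‖h x‖₊ : ℝ≥0∞)) < ⊤
    have : ∀ x, (‖h x‖₊ : ℝ≥0∞) = ENNReal.ofReal (h x) :=
      fun x => Real.enorm_eq_ofReal (hhnn x)
    simp only [this, hlint]
    exact ENNReal.one_lt_top
  have hIh : ∫ x, h x = 1 := by
    rw [integral_eq_lintegral_of_nonneg_ae (Filter.Eventually.of_forall hhnn)
      hhmeas.aestronglyMeasurable, hlint, ENNReal.toReal_one]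
  -- integrability of D * inv on Ioo
  have hIOn : IntegrableOn (fun x => D x * x⁻¹) (Ioo m M) volume := by
    apply Integrable.mono' ((hint_h.const_mul m⁻¹).restrict (s := Ioo m M))
      ((hDmeas.mul measurable_inv).aestronglyMeasurable.restrict)
    rw [ae_restrict_iff' measurableSet_Ioo]
    apply Filter.Eventually.of_forall
    intro x hx
    have hx0 : 0 < x := hm.trans hx.1
    have hDnn : 0 ≤ D x := by rw [hD]; positivity
    rw [Real.norm_eq_abs, Pi.mul_apply, abs_of_nonneg (mul_nonneg hDnn (inv_nonneg.2 hx0.le)),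
      hh, Set.indicator_of_mem hx]
    calc D x * x⁻¹ ≤ D x * m⁻¹ :=
          mul_le_mul_of_nonneg_left ((inv_le_inv₀ hx0 hm).2 hx.1.le) hDnn
      _ = m⁻¹ * D x := mul_comm _ _
  -- rewrite the integral against the density
  have hkey : ∫ b, (1 - b⁻¹ * M) ∂(arcsineMeasure m M)
      = ∫ x, h x * (1 - x⁻¹ * M) := by
    rw [show arcsineMeasure m M
        = volume.withDensity (fun x => ((fun y => (h y).toNNReal) x : ℝ≥0∞)) from rfl,
      integral_withDensity_eq_integral_smul hhmeas.real_toNNReal _]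
    congr 1
    funext x
    rw [NNReal.smul_def, smul_eq_mul, Real.coe_toNNReal _ (hhnn x)]
  have hkey2 : (∫ x, h x * (1 - x⁻¹ * M)) = ∫ x in Ioo m M, D x * (1 - x⁻¹ * M) := by
    rw [← integral_indicator measurableSet_Ioo]
    congr 1
    funext x
    by_cases hx : x ∈ Ioo m M
    · rw [hh, Set.indicator_of_mem hx, Set.indicator_of_mem hx]
    · rw [hh, Set.indicator_of_notMem hx, Set.indicator_of_notMem hx, zero_mul]
  have hIOnD : IntegrableOn D (Ioo m M) volume :=
    (integrable_indicator_iff measurableSet_Ioo).1 hint_h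
  have hsplit : (∫ x in Ioo m M, D x * (1 - x⁻¹ * M))
      = (∫ x in Ioo m M, D x) - M * ∫ x in Ioo m M, D x * x⁻¹ := by
    have : (fun x => D x * (1 - x⁻¹ * M)) = fun x => D x - M * (D x * x⁻¹) := by
      funext x; ring
    rw [this, integral_sub hIOnD (hIOn.const_mul M), integral_const_mul]
  have hIhD : ∫ x in Ioo m M, D x = 1 := by
    rw [← integral_indicator measurableSet_Ioo]; exact hIh
  have hval : M * (Real.sqrt (m*M))⁻¹ = Real.sqrt (M/m) := by
    have hM2 : Real.sqrt M ^ 2 = M := Real.sq_sqrt hM.le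
    have hsm : 0 < Real.sqrt m := Real.sqrt_pos.2 hm
    have hsM : 0 < Real.sqrt M := Real.sqrt_pos.2 hM
    rw [Real.sqrt_div hM.le, Real.sqrt_mul hm.le]
    field_simp
    linear_combination (-1 : ℝ) * hM2
  rw [hkey, hkey2, hsplit, hIhD, arc_inv_integral m M hm hmM hIOn, hval]

/-- running gradient descent on `f(x) = (M/2)x²` with i.i.d. inverse
stepsizes `β_n ~ Arcsine(m, M)` yields `E[x_n] = (1 - √κ)ⁿ x₀` for every `n`,
and consequently `E[|x_n|/|x₀|]^{1/n} ≥ √κ - 1` for any `x₀ ≠ 0` and `n ≥ 1`,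
where `κ = M/m`. -/
theorem gd_quadratic_unstable_in_mean
    {Ω : Type*} [MeasurableSpace Ω] (P : Measure Ω) [IsProbabilityMeasure P]
    (m M : ℝ) (hm : 0 < m) (hmM : m < M)
    (beta : ℕ → Ω → ℝ) (hmeas : ∀ n, Measurable (beta n))
    (hindep : iIndepFun beta P)
    (hdist : ∀ n, P.map (beta n) = arcsineMeasure m M)
    (x₀ : ℝ) (x : ℕ → Ω → ℝ)
    (hx0 : ∀ ω, x 0 ω = x₀)
    (hrec : ∀ n ω, x (n + 1) ω = x n ω - (beta n ω)⁻¹ * (M * x n ω)) :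
    (∀ n, ∫ ω, x n ω ∂P = (1 - Real.sqrt (M / m)) ^ n * x₀) ∧
    (x₀ ≠ 0 → ∀ n : ℕ, 1 ≤ n →
      Real.sqrt (M / m) - 1 ≤ (∫ ω, |x n ω| / |x₀| ∂P) ^ ((1 : ℝ) / n)) := by
  have hM : 0 < M := hm.trans hmM
  have hprob : IsProbabilityMeasure (arcsineMeasure m M) := by
    rw [← hdist 0]
    exact Measure.isProbabilityMeasure_map (hmeas 0).aemeasurable
  set g : ℝ → ℝ := fun b => 1 - b⁻¹ * M with hg
  have hgmeas : Measurable g := by fun_prop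
  set y : ℕ → Ω → ℝ := fun n => g ∘ beta n with hy
  have hymeas : ∀ n, Measurable (y n) := fun n => hgmeas.comp (hmeas n)
  have hyindep : iIndepFun y P :=
    hindep.comp (fun _ => g) (fun _ => hgmeas)
  set c : ℝ := 1 - Real.sqrt (M/m) with hc
  have hEy : ∀ n, ∫ ω, y n ω ∂P = c := by
    intro n
    have h1 : ∫ ω, y n ω ∂P = ∫ b, g b ∂(P.map (beta n)) :=
      (integral_map (hmeas n).aemeasurable hgmeas.aestronglyMeasurable).symm
    rw [h1, hdist n, hg]
    exact arc_exp m M hm hmM hprob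
  have hxprod : ∀ n ω, x n ω = (∏ j ∈ Finset.range n, y j) ω * x₀ := by
    intro n
    induction n with
    | zero => intro ω; simp [hx0 ω]
    | succ n ih =>
      intro ω
      rw [hrec n ω, ih ω, Finset.prod_apply, Finset.prod_apply, Finset.prod_range_succ]
      have : y n ω = 1 - (beta n ω)⁻¹ * M := rfl
      rw [this]
      ring
  have hEprod : ∀ n, ∫ ω, (∏ j ∈ Finset.range n, y j) ω ∂P = c ^ n := by
    intro n
    induction n with
    | zero => simp
    | succ n ih =>
      have hind : IndepFun (∏ j ∈ Finset.range n, y j) (y n) P :=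
        hyindep.indepFun_prod_range_succ hymeas n
      have hpm : AEStronglyMeasurable (∏ j ∈ Finset.range n, y j) P := by
        apply Measurable.aestronglyMeasurable
        have hmp : Measurable fun ω => ∏ j ∈ Finset.range n, y j ω :=
          Finset.measurable_prod _ (fun j _ => hymeas j)
        have heq : (∏ j ∈ Finset.range n, y j) = fun ω => ∏ j ∈ Finset.range n, y j ω := by
          funext ω; exact Finset.prod_apply ω _ _
        rw [heq]; exact hmp
      have := hind.integral_mul_eq_mul_integral hpm (hymeas n).aestronglyMeasurable
      calc ∫ ω, (∏ j ∈ Finset.range (n+1), y j) ω ∂P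
          = ∫ ω, ((∏ j ∈ Finset.range n, y j) * y n) ω ∂P := by
            congr 1; funext ω
            simp [Finset.prod_apply, Finset.prod_range_succ]
        _ = (∫ ω, (∏ j ∈ Finset.range n, y j) ω ∂P) * ∫ ω, y n ω ∂P := this
        _ = c ^ n * c := by rw [ih, hEy n]
        _ = c ^ (n+1) := by ring
  have part1 : ∀ n, ∫ ω, x n ω ∂P = c ^ n * x₀ := by
    intro n
    calc ∫ ω, x n ω ∂P = ∫ ω, (∏ j ∈ Finset.range n, y j) ω * x₀ ∂P := by
          congr 1; funext ω; exact hxprod n ω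
      _ = (∫ ω, (∏ j ∈ Finset.range n, y j) ω ∂P) * x₀ := by
          rw [integral_mul_const]
      _ = c ^ n * x₀ := by rw [hEprod n]
  refine ⟨part1, ?_⟩
  intro hx₀ n hn
  have hb1 : 1 < Real.sqrt (M/m) := by
    rw [show (1:ℝ) = Real.sqrt 1 from Real.sqrt_one.symm]
    exact Real.sqrt_lt_sqrt zero_le_one ((one_lt_div hm).2 hmM)
  set b : ℝ := Real.sqrt (M/m) - 1 with hbdef
  have hb : 0 < b := by rw [hbdef]; linarith
  have habs : 0 < |x₀| := abs_pos.2 hx₀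
  have h2 : |∫ ω, x n ω ∂P| = b ^ n * |x₀| := by
    rw [part1 n, abs_mul, abs_pow, hc, abs_of_nonpos (by linarith), hbdef]
    ring_nf
  have h3 : |∫ ω, x n ω ∂P| ≤ ∫ ω, |x n ω| ∂P := by
    simpa [Real.norm_eq_abs] using norm_integral_le_integral_norm (μ := P) (fun ω => x n ω)
  have h1 : b ^ n ≤ ∫ ω, |x n ω| / |x₀| ∂P := by
    rw [integral_div, le_div_iff₀ habs]
    calc b ^ n * |x₀| = |∫ ω, x n ω ∂P| := h2.symm
      _ ≤ ∫ ω, |x n ω| ∂P := h3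
  have hbn : (b ^ n) ^ ((1:ℝ)/n) = b := by
    rw [← Real.rpow_natCast b n, ← Real.rpow_mul hb.le]
    rw [mul_one_div, div_self (Nat.cast_ne_zero.2 (by omega)), Real.rpow_one]
  calc b = (b ^ n) ^ ((1:ℝ)/n) := hbn.symm
    _ ≤ (∫ ω, |x n ω| / |x₀| ∂P) ^ ((1:ℝ)/n) :=
        Real.rpow_le_rpow (pow_nonneg hb.le n) h1 (by positivity)
end

section
/- Let λ ∈ [m, M] with 0 < m ≤ M, and let α = a + bi ∈ ℂ. Let ã be the projection of the real part a onto the interval [1/M, 1/m]. Then |1 - λ ã| ≤ |1 - λ α|. -/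
open Complex

/-- for `λ ∈ [m, M]` with `0 < m ≤ M` and `α = a + b i ∈ ℂ`, with
`ã` the projection of `a` onto `[1/M, 1/m]`, one has `|1 - λ ã| ≤ |1 - λ α|`. -/
theorem projected_stepsize_le (m M lam : ℝ) (hm : 0 < m) (hmM : m ≤ M)
    (hlam : lam ∈ Set.Icc m M) (a b : ℝ) :
    |1 - lam * (max (min a (1/m)) (1/M))|
      ≤ ‖1 - (lam : ℂ) * (a + b * Complex.I)‖ := by
  obtain ⟨h1, h2⟩ := hlam
  have hlam0 : 0 < lam := lt_of_lt_of_le hm h1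
  have hM : 0 < M := lt_of_lt_of_le hm hmM
  have key : |1 - lam * (max (min a (1/m)) (1/M))| ≤ |1 - lam * a| := by
    have hA : 1/M ≤ 1/lam := by
      apply one_div_le_one_div_of_le hlam0 h2
    have hB : 1/lam ≤ 1/m := by
      apply one_div_le_one_div_of_le hm h1
    rcases le_total a (1/M) with h | h
    · have hmax : max (min a (1/m)) (1/M) = 1/M :=
        max_eq_right (le_trans (min_le_left _ _) h)
      rw [hmax]
      rw [abs_le]
      constructor
      · have : 1 - lam * (1/M) ≥ 0 := by
          have := mul_le_mul_of_nonneg_left hA hlam0.le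
          have hl : lam * (1/lam) = 1 := by field_simp
          nlinarith
        nlinarith [abs_nonneg (1 - lam * a)]
      · have : 1 - lam * a ≥ 1 - lam * (1/M) :=
          by nlinarith [mul_le_mul_of_nonneg_left h hlam0.le]
        calc 1 - lam * (1/M) ≤ 1 - lam * a := this
          _ ≤ |1 - lam * a| := le_abs_self _
    · rcases le_total (1/m) a with h' | h'
      · have hmax : max (min a (1/m)) (1/M) = 1/m := by
          rw [min_eq_right h', max_eq_left (le_trans (one_div_le_one_div_of_le hm hmM) le_rfl)]
        rw [hmax, abs_le]
        have hle : 1 - lam * (1/m) ≤ 0 := by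
          have := mul_le_mul_of_nonneg_left hB hlam0.le
          have hl : lam * (1/lam) = 1 := by field_simp
          nlinarith
        constructor
        · have : 1 - lam * a ≤ 1 - lam * (1/m) :=
            by nlinarith [mul_le_mul_of_nonneg_left h' hlam0.le]
          have h3 : -(1 - lam * a) ≤ |1 - lam * a| := neg_le_abs _
          nlinarith
        · nlinarith [abs_nonneg (1 - lam * a)]
      · have hmax : max (min a (1/m)) (1/M) = a := by
          rw [min_eq_left h', max_eq_left h]
        rw [hmax]
  refine le_trans key ?_
  have hre : (1 - (lam : ℂ) * (a + b * Complex.I)).re = 1 - lam * a := by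
    simp
  calc |1 - lam * a| = |(1 - (lam : ℂ) * (a + b * Complex.I)).re| := by rw [hre]
    _ ≤ ‖1 - (lam : ℂ) * (a + b * Complex.I)‖ := Complex.abs_re_le_norm _
end
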